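/- With the same local setup, assuming any two orders in B_p of the same discriminant containing O_{K_p} are conjugate by an element of K_p^× (Gross's local result), one has X_{D,p} = N(R_p)·K_p^×: every x with K_p ∩ x⁻¹R_p x = O_{K_p} factors as an element of the normalizer of R_p times an element of K_p^×. -/
import Mathlib


/-- The conjugate order `x⁻¹ R x = {c | x c x⁻¹ ∈ R}`. -/
def conjSubring {A : Type*} [Ring A] (x : Aˣ) (R : Subring A) : Subring A where
  carrier := {c | (x : A) * c * ((x⁻¹ : Aˣ) : A) ∈ R}
  zero_mem' := by simpa using R.zero_mem
  one_mem' := by simpa using R.one_mem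
  add_mem' := by
    intro a b ha hb
    simpa [mul_add, add_mul] using R.add_mem ha hb
  neg_mem' := by
    intro a ha
    simpa [mul_neg, neg_mul] using R.neg_mem ha
  mul_mem' := by
    intro a b ha hb
    have h := R.mul_mem ha hb
    have key : ((x : A) * a * ((x⁻¹ : Aˣ) : A)) * ((x : A) * b * ((x⁻¹ : Aˣ) : A))
        = (x : A) * (a * b) * ((x⁻¹ : Aˣ) : A) := by
      simp [mul_assoc, Units.inv_mul_cancel_left]
    rwa [key] at h

/-- `X_{D,p} = N(R_p)·K_p^×`: assuming Gross's local result that any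
two orders of the same discriminant containing `O_{K_p}` are conjugate by an element
of `K_p^×`, every `x` with `K_p ∩ x⁻¹R_p x = O_{K_p}` factors as `x = z·a` with `z`
normalizing `R_p` and `a ∈ K_p^×`. -/
theorem special_points_eq_normalizer_mul_K
    {A ι : Type*} [Ring A]
    (Kp OKp Rp : Subring A) (hKO : OKp ≤ Kp) (hOR : OKp ≤ Rp)
    (disc : Subring A → ι)
    (hdisc : ∀ x : Aˣ, disc (conjSubring x Rp) = disc Rp)
    (hGross : ∀ Q : Subring A, OKp ≤ Q → disc Q = disc Rp →
      ∃ a : Aˣ, (a : A) ∈ Kp ∧ ((a⁻¹ : Aˣ) : A) ∈ Kp ∧ conjSubring a Rp = Q)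
    (x : Aˣ)
    (hx : Kp ⊓ conjSubring x Rp = OKp) :
    ∃ z a : Aˣ, conjSubring z Rp = Rp ∧ (a : A) ∈ Kp ∧ x = z * a := by
  have hO : OKp ≤ conjSubring x Rp := hx ▸ inf_le_right
  obtain ⟨a, haK, haK', hconj⟩ := hGross _ hO (hdisc x)
  have hmem : ∀ c : A, (a : A) * c * ((a⁻¹ : Aˣ) : A) ∈ Rp ↔
      (x : A) * c * ((x⁻¹ : Aˣ) : A) ∈ Rp := by
    intro c
    exact SetLike.ext_iff.mp hconj c
  refine ⟨x * a⁻¹, a, ?_, haK, by rw [mul_assoc]; simp⟩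
  ext c
  have := hmem (((a⁻¹ : Aˣ) : A) * c * (a : A))
  constructor
  · intro hc
    have h1 : (a : A) * (((a⁻¹ : Aˣ) : A) * c * (a : A)) * ((a⁻¹ : Aˣ) : A) = c := by
      simp [mul_assoc, Units.mul_inv_cancel_left]
    have h2 : (x : A) * (((a⁻¹ : Aˣ) : A) * c * (a : A)) * ((x⁻¹ : Aˣ) : A)
        = ((x * a⁻¹ : Aˣ) : A) * c * (((x * a⁻¹)⁻¹ : Aˣ) : A) := by
      simp [mul_assoc]
    have := (this.mpr (by rw [h2]; exact hc))
    rwa [h1] at this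
  · intro hc
    have h1 : (a : A) * (((a⁻¹ : Aˣ) : A) * c * (a : A)) * ((a⁻¹ : Aˣ) : A) = c := by
      simp [mul_assoc, Units.mul_inv_cancel_left]
    have h2 : (x : A) * (((a⁻¹ : Aˣ) : A) * c * (a : A)) * ((x⁻¹ : Aˣ) : A)
        = ((x * a⁻¹ : Aˣ) : A) * c * (((x * a⁻¹)⁻¹ : Aˣ) : A) := by
      simp [mul_assoc]
    have := this.mp (by rwa [h1])
    rwa [h2] at this
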